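/- If a 3×3 matrix B is skew-symmetric, then I₃ + B is invertible and exp(B) ∈ SO(3); moreover for B = θ ñ with ‖n‖ = 1, the quaternion P = (cos(θ/2), sin(θ/2) n) satisfies A(P) = exp(θ ñ). -/

import Mathlib

open Matrix

section

attribute [local instance] Matrix.linftyOpNormedRing Matrix.linftyOpNormedAlgebra

/-- The cross-product (skew-symmetric) matrix `p̃` with `p̃ r = p × r`. -/
noncomputable def skew (p : Fin 3 → ℝ) : Matrix (Fin 3) (Fin 3) ℝ :=
  !![0, -p 2, p 1; p 2, 0, -p 0; -p 1, p 0, 0]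

/-- The rotation matrix of a unit quaternion, `A(P) = I₃ + 2((p̃)² + p₀ p̃)`. -/
noncomputable def AmatUnit (p0 : ℝ) (p : Fin 3 → ℝ) : Matrix (Fin 3) (Fin 3) ℝ :=
  1 + (2:ℝ) • (skew p * skew p + p0 • skew p)

lemma skew_smul (t : ℝ) (n : Fin 3 → ℝ) : skew (t • n) = t • skew n := by
  ext i j
  fin_cases i <;> fin_cases j <;> simp [skew] <;> ring

lemma skew_cube (n : Fin 3 → ℝ) (hn : n 0 ^ 2 + n 1 ^ 2 + n 2 ^ 2 = 1) :
    skew n * (skew n * skew n) = -skew n := by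
  simp only [skew, Matrix.mul_fin_three]
  ext i j
  fin_cases i <;> fin_cases j <;> simp <;>
    first
    | ring1
    | linear_combination (n 0) * hn
    | linear_combination (-(n 0)) * hn
    | linear_combination (n 1) * hn
    | linear_combination (-(n 1)) * hn
    | linear_combination (n 2) * hn
    | linear_combination (-(n 2)) * hn

open NormedSpace in
lemma exp_skew (θ : ℝ) (n : Fin 3 → ℝ) (hn : n 0 ^ 2 + n 1 ^ 2 + n 2 ^ 2 = 1) :
    exp (θ • skew n) =
      1 + Real.sin θ • skew n + (1 - Real.cos θ) • (skew n * skew n) := by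
  set K := skew n with hK
  set R : ℝ → Matrix (Fin 3) (Fin 3) ℝ :=
    fun t => 1 + Real.sin t • K + (1 - Real.cos t) • (K * K) with hR
  have hKR : ∀ t, K * R t = Real.cos t • K + Real.sin t • (K * K) := by
    intro t
    simp only [hR, mul_add, mul_one, mul_smul_comm, (skew_cube n hn : K * (K * K) = -K)]
    rw [show K * (K * K) = -K from skew_cube n hn]
    module
  set g : ℝ → Matrix (Fin 3) (Fin 3) ℝ := fun t => exp (-(t • K)) * R t with hg
  have hder : ∀ t, HasDerivAt g 0 t := by
    intro t
    have h1 : HasDerivAt (fun t : ℝ => exp (-(t • K)))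
        ((-1 : ℝ) • (K * exp (-(t • K)))) t := by
      have := (hasDerivAt_exp_smul_const' K (-t)).scomp t (hasDerivAt_neg t)
      simp only [Function.comp_def, neg_smul] at this
      exact this.congr_deriv (by simp; rfl)
    have h2 : HasDerivAt R (Real.cos t • K + Real.sin t • (K * K)) t := by
      have hs := (Real.hasDerivAt_sin t).smul_const K
      have hc := ((hasDerivAt_const t (1:ℝ)).sub (Real.hasDerivAt_cos t)).smul_const (K * K)
      have := ((hasDerivAt_const t (1 : Matrix (Fin 3) (Fin 3) ℝ)).add hs).add hc
      exact this.congr_deriv (by simp)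
    have hd := h1.mul h2
    have hcomm : K * exp (-(t • K)) = exp (-(t • K)) * K :=
      ((((Commute.refl K).smul_right t).neg_right).exp_right).eq
    have hcomm' : K * exp (-(t • K)) = exp (-(t • K)) * K := by
      simpa [smul_neg] using hcomm
    have hzero : (-1 : ℝ) • (K * exp (-(t • K))) * R t
        + exp (-(t • K)) * (Real.cos t • K + Real.sin t • (K * K)) = 0 := by
      rw [neg_one_smul, neg_mul, hcomm', mul_assoc, hKR t, neg_add_cancel]
    exact hzero ▸ hd
  have hconst : ∀ t, g t = g 0 :=
    fun t => is_const_of_deriv_eq_zero (fun x => (hder x).differentiableAt)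
      (fun x => (hder x).deriv) t 0
  have hg0 : g 0 = 1 := by simp [hg, hR, exp_zero]
  have hinv : exp (θ • K) * exp (-(θ • K)) = 1 := by
    rw [← Matrix.exp_add_of_commute _ _ ((Commute.refl (θ • K)).neg_right),
      add_neg_cancel, exp_zero]
  have hθ := hconst θ
  rw [hg0, hg] at hθ
  calc exp (θ • K) = exp (θ • K) * (exp (-(θ • K)) * R θ) := by
        rw [show exp (-(θ • K)) * R θ = 1 from hθ, mul_one]
    _ = (exp (θ • K) * exp (-(θ • K))) * R θ := by rw [mul_assoc]
    _ = R θ := by rw [hinv, one_mul]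

lemma part1 (B : Matrix (Fin 3) (Fin 3) ℝ) (hB : Bᵀ = -B) : IsUnit (1 + B) := by
  have hb : ∀ i j, B j i = -(B i j) := by
    intro i j
    have := congrFun (congrFun hB i) j
    simpa using this
  have h00 : B 0 0 = 0 := by have := hb 0 0; linarith
  have h11 : B 1 1 = 0 := by have := hb 1 1; linarith
  have h22 : B 2 2 = 0 := by have := hb 2 2; linarith
  have hdet : (1 + B).det = 1 + (B 0 1)^2 + (B 0 2)^2 + (B 1 2)^2 := by
    rw [Matrix.det_fin_three]
    simp [Matrix.add_apply, Matrix.one_apply, h00, h11, h22]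
    rw [hb 1 0, hb 2 0, hb 2 1]
    ring
  refine (Matrix.isUnit_iff_isUnit_det _).2 (isUnit_iff_ne_zero.2 ?_)
  rw [hdet]
  positivity

open NormedSpace in
lemma part2 (B : Matrix (Fin 3) (Fin 3) ℝ) (hB : Bᵀ = -B) :
    (exp B)ᵀ * exp B = 1 := by
  rw [← Matrix.exp_transpose, hB,
    ← Matrix.exp_add_of_commute _ _ (Commute.refl B).neg_left, neg_add_cancel, exp_zero]

open NormedSpace in
lemma part3 (B : Matrix (Fin 3) (Fin 3) ℝ) (hB : Bᵀ = -B) : (exp B).det = 1 := by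
  have hsq : (exp B).det * (exp B).det = 1 := by
    have := congrArg Matrix.det (part2 B hB)
    rwa [Matrix.det_mul, Matrix.det_transpose, Matrix.det_one] at this
  have hhalf : B = (1/2 : ℝ) • B + (1/2 : ℝ) • B := by module
  have hpos : (exp B).det = (exp ((1/2 : ℝ) • B)).det * (exp ((1/2 : ℝ) • B)).det := by
    rw [hhalf, Matrix.exp_add_of_commute _ _ (Commute.refl _), Matrix.det_mul, ← hhalf]
  nlinarith [sq_nonneg ((exp ((1/2 : ℝ) • B)).det)]

end

/-- If `B` is skew-symmetric then `I₃ + B` is invertible and `exp(B) ∈ SO(3)`; moreover, for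
`B = θ ñ` with `‖n‖ = 1`, the quaternion `P = (cos(θ/2), sin(θ/2) n)` satisfies
`A(P) = exp(θ ñ)`. -/
theorem stmt_18 :
    (∀ B : Matrix (Fin 3) (Fin 3) ℝ, Bᵀ = -B →
      IsUnit (1 + B) ∧
      (NormedSpace.exp B)ᵀ * NormedSpace.exp B = 1 ∧
      (NormedSpace.exp B).det = 1) ∧
    (∀ (θ : ℝ) (n : Fin 3 → ℝ), n 0 ^ 2 + n 1 ^ 2 + n 2 ^ 2 = 1 →
      AmatUnit (Real.cos (θ / 2)) (Real.sin (θ / 2) • n) =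
        NormedSpace.exp (θ • skew n)) := by
  constructor
  · exact fun B hB => ⟨part1 B hB, part2 B hB, part3 B hB⟩
  · intro θ n hn
    rw [exp_skew θ n hn]
    have hs : Real.sin θ = 2 * Real.sin (θ/2) * Real.cos (θ/2) := by
      have := Real.sin_two_mul (θ/2)
      rw [show 2*(θ/2) = θ by ring] at this
      linarith
    have hc : 1 - Real.cos θ = 2 * Real.sin (θ/2)^2 := by
      have h1 := Real.sin_sq_add_cos_sq (θ/2)
      have h2 := Real.cos_two_mul (θ/2)
      rw [show 2*(θ/2) = θ by ring] at h2
      nlinarith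
    rw [AmatUnit, skew_smul, smul_mul_smul_comm, hs, hc]
    module
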